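/- Let κ > 0, δ > 0, C ≥ 0, M > 0, and fix t < 0. Suppose that for each s with t ≤ s < 0 we are given a map φ(s,t) : ℝ³ → ℝ³ and for t ≤ t' ≤ s < 0 maps φ(s,t') : ℝ³ → ℝ³, satisfying: (i) φ(t,t) is the identity; (ii) the cocycle property φ(s,t) = φ(s,s') ∘ φ(s',t) for t ≤ s' ≤ s < 0; and (iii) the flow estimate |φ(s,s')y − y| ≤ C·(|s'|^{−κ}|y|)^{−δ}·|y| whenever t ≤ s' ≤ s < 0 and |y| ≥ M·|s'|^κ. Then there is a constant M' > 0, depending only on C, δ, M, such that for every x ∈ ℝ³ with |x| ≥ M'·|t|^κ, the limit lim_{s → 0⁻} φ(s,t)x exists in ℝ³. -/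

import Mathlib

open Set Filter

/-- Existence of the limiting flow: if the maps `φ(s,t)` satisfy the identity
at `s = t`, the cocycle property, and the flow estimate
`|φ(s,s')y − y| ≤ C (|s'|^{−κ}|y|)^{−δ} |y|` for `|y| ≥ M|s'|^κ`, then there is
`M' > 0` (depending only on `C, δ, M`) such that `lim_{s→0⁻} φ(s,t)x` exists
for every `x` with `|x| ≥ M'|t|^κ`. -/
theorem stmt15 (κ δ C M : ℝ) (hκ : 0 < κ) (hδ : 0 < δ) (hC : 0 ≤ C) (hM : 0 < M)
    (t : ℝ) (ht : t < 0)
    (φ : ℝ → ℝ → EuclideanSpace ℝ (Fin 3) → EuclideanSpace ℝ (Fin 3))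
    (hid : ∀ x : EuclideanSpace ℝ (Fin 3), φ t t x = x)
    (hcoc : ∀ s' s : ℝ, t ≤ s' → s' ≤ s → s < 0 →
      ∀ x : EuclideanSpace ℝ (Fin 3), φ s s' (φ s' t x) = φ s t x)
    (hflow : ∀ s' s : ℝ, t ≤ s' → s' ≤ s → s < 0 →
      ∀ y : EuclideanSpace ℝ (Fin 3), M * |s'| ^ κ ≤ ‖y‖ →
        ‖φ s s' y - y‖ ≤ C * (|s'| ^ (-κ) * ‖y‖) ^ (-δ) * ‖y‖) :
    ∃ M' : ℝ, 0 < M' ∧ ∀ x : EuclideanSpace ℝ (Fin 3), M' * |t| ^ κ ≤ ‖x‖ →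
      ∃ L : EuclideanSpace ℝ (Fin 3),
        Tendsto (fun s => φ s t x) (nhdsWithin 0 (Iio 0)) (nhds L) := by
  set M' : ℝ := max (2 * M) ((2 * C + 1) ^ (1 / δ)) with hM'def
  have hM'pos : 0 < M' := lt_of_lt_of_le (by linarith) (le_max_left _ _)
  have hM'2M : 2 * M ≤ M' := le_max_left _ _
  have hMM' : M ≤ M' := by linarith
  have hM'pow : 2 * C + 1 ≤ M' ^ δ := by
    have h1 : ((2 * C + 1) ^ (1 / δ)) ^ δ = 2 * C + 1 := by
      rw [← Real.rpow_mul (by linarith), one_div_mul_cancel hδ.ne', Real.rpow_one]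
    calc 2 * C + 1 = ((2 * C + 1) ^ (1 / δ)) ^ δ := h1.symm
      _ ≤ M' ^ δ :=
          Real.rpow_le_rpow (Real.rpow_nonneg (by linarith) _) (le_max_right _ _) hδ.le
  have hCM' : C * M' ^ (-δ) ≤ 1 / 2 := by
    rw [Real.rpow_neg hM'pos.le]
    have hpow : 0 < M' ^ δ := Real.rpow_pos_of_pos hM'pos δ
    rw [← div_eq_mul_inv, div_le_div_iff₀ hpow two_pos]
    nlinarith
  have htabs : 0 < |t| := abs_pos.mpr ht.ne
  have htκ : 0 < |t| ^ κ := Real.rpow_pos_of_pos htabs κ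
  refine ⟨M', hM'pos, fun x hx => ?_⟩
  have hxpos : 0 < ‖x‖ := lt_of_lt_of_le (by positivity) hx
  -- One-step estimate from `t`.
  have hone : ∀ s, t ≤ s → s < 0 → ‖φ s t x - x‖ ≤ ‖x‖ / 2 := by
    intro s hts hs0
    have hMx : M * |t| ^ κ ≤ ‖x‖ := le_trans (by nlinarith) hx
    have h1 : ‖φ s t x - x‖ ≤ C * (|t| ^ (-κ) * ‖x‖) ^ (-δ) * ‖x‖ :=
      hflow t s le_rfl hts hs0 x hMx
    have hbase : M' ≤ |t| ^ (-κ) * ‖x‖ := by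
      have := mul_le_mul_of_nonneg_left hx (Real.rpow_nonneg htabs.le (-κ))
      calc M' = |t| ^ (-κ) * (M' * |t| ^ κ) := by
            rw [← mul_assoc, mul_comm (|t| ^ (-κ)) M', mul_assoc,
              ← Real.rpow_add htabs, neg_add_cancel, Real.rpow_zero, mul_one]
        _ ≤ |t| ^ (-κ) * ‖x‖ := this
    have h2 : (|t| ^ (-κ) * ‖x‖) ^ (-δ) ≤ M' ^ (-δ) :=
      Real.rpow_le_rpow_of_nonpos hM'pos hbase (by linarith)
    calc ‖φ s t x - x‖ ≤ C * (|t| ^ (-κ) * ‖x‖) ^ (-δ) * ‖x‖ := h1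
      _ ≤ C * M' ^ (-δ) * ‖x‖ := by
          apply mul_le_mul_of_nonneg_right _ hxpos.le
          exact mul_le_mul_of_nonneg_left h2 hC
      _ ≤ 1 / 2 * ‖x‖ := mul_le_mul_of_nonneg_right hCM' hxpos.le
      _ = ‖x‖ / 2 := by ring
  have hlow : ∀ s, t ≤ s → s < 0 → ‖x‖ / 2 ≤ ‖φ s t x‖ := by
    intro s hts hs0
    have := hone s hts hs0
    have h := norm_sub_norm_le x (φ s t x)
    rw [norm_sub_rev] at h
    linarith
  have hhigh : ∀ s, t ≤ s → s < 0 → ‖φ s t x‖ ≤ 3 / 2 * ‖x‖ := by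
    intro s hts hs0
    have := hone s hts hs0
    have h := norm_sub_norm_le (φ s t x) x
    linarith
  -- Increment estimate.
  set K : ℝ := C * (‖x‖ / 2) ^ (-δ) * (3 / 2 * ‖x‖) with hKdef
  have hKnn : 0 ≤ K := by positivity
  have hincr : ∀ s' s, t ≤ s' → s' ≤ s → s < 0 →
      ‖φ s t x - φ s' t x‖ ≤ K * |s'| ^ (κ * δ) := by
    intro s' s hts' hs's hs0
    have hs'0 : s' < 0 := lt_of_le_of_lt hs's hs0
    have hs'abs : 0 < |s'| := abs_pos.mpr hs'0.ne
    set y := φ s' t x with hy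
    have hylow : ‖x‖ / 2 ≤ ‖y‖ := hlow s' hts' hs'0
    have hyhigh : ‖y‖ ≤ 3 / 2 * ‖x‖ := hhigh s' hts' hs'0
    have hypos : 0 < ‖y‖ := lt_of_lt_of_le (by positivity) hylow
    have hs't : |s'| ≤ |t| := by
      rw [abs_of_neg hs'0, abs_of_neg ht]; linarith
    have hMy : M * |s'| ^ κ ≤ ‖y‖ := by
      have h1 : |s'| ^ κ ≤ |t| ^ κ := Real.rpow_le_rpow hs'abs.le hs't hκ.le
      have h2 : M * |t| ^ κ ≤ ‖x‖ / 2 := by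
        have : 2 * M * |t| ^ κ ≤ M' * |t| ^ κ := mul_le_mul_of_nonneg_right hM'2M htκ.le
        linarith [le_trans this hx]
      calc M * |s'| ^ κ ≤ M * |t| ^ κ := mul_le_mul_of_nonneg_left h1 hM.le
        _ ≤ ‖x‖ / 2 := h2
        _ ≤ ‖y‖ := hylow
    have hflow' := hflow s' s hts' hs's hs0 y hMy
    rw [hcoc s' s hts' hs's hs0 x] at hflow'
    have hsplit : (|s'| ^ (-κ) * ‖y‖) ^ (-δ) = |s'| ^ (κ * δ) * ‖y‖ ^ (-δ) := by
      rw [Real.mul_rpow (Real.rpow_nonneg hs'abs.le _) hypos.le,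
        ← Real.rpow_mul hs'abs.le, neg_mul_neg]
    have hyδ : ‖y‖ ^ (-δ) ≤ (‖x‖ / 2) ^ (-δ) :=
      Real.rpow_le_rpow_of_nonpos (by positivity) hylow (by linarith)
    calc ‖φ s t x - φ s' t x‖ ≤ C * (|s'| ^ (-κ) * ‖y‖) ^ (-δ) * ‖y‖ := hflow'
      _ = C * (|s'| ^ (κ * δ) * ‖y‖ ^ (-δ)) * ‖y‖ := by rw [hsplit]
      _ ≤ C * (|s'| ^ (κ * δ) * (‖x‖ / 2) ^ (-δ)) * (3 / 2 * ‖x‖) := by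
          gcongr
      _ = K * |s'| ^ (κ * δ) := by ring
  -- Cauchy criterion.
  have hneBot : (nhdsWithin (0:ℝ) (Iio 0)).NeBot := by infer_instance
  have hten : Tendsto (fun s : ℝ => K * |s| ^ (κ * δ)) (nhdsWithin 0 (Iio 0)) (nhds 0) := by
    have h1 : Tendsto (fun s : ℝ => |s| ^ (κ * δ)) (nhds 0) (nhds 0) := by
      have hc : ContinuousAt (fun r : ℝ => r ^ (κ * δ)) 0 :=
        Real.continuousAt_rpow_const 0 (κ * δ) (Or.inr (by positivity))
      have := hc.tendsto.comp (show Tendsto (fun s : ℝ => |s|) (nhds 0) (nhds 0) by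
        simpa using continuous_abs.tendsto (0:ℝ))
      simpa [Function.comp_def, Real.zero_rpow (by positivity : (κ*δ) ≠ 0)] using this
    have h2 : Tendsto (fun s : ℝ => K * |s| ^ (κ * δ)) (nhds 0) (nhds 0) := by
      simpa using h1.const_mul K
    exact h2.mono_left nhdsWithin_le_nhds
  have hcauchy : Cauchy (map (fun s => φ s t x) (nhdsWithin (0:ℝ) (Iio 0))) := by
    rw [Metric.cauchy_iff]
    refine ⟨map_neBot, fun ε hε => ?_⟩
    have hS : {s : ℝ | t ≤ s ∧ s < 0 ∧ K * |s| ^ (κ * δ) < ε} ∈ nhdsWithin (0:ℝ) (Iio 0) := by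
      have h1 : ∀ᶠ s in nhdsWithin (0:ℝ) (Iio 0), t ≤ s :=
        eventually_nhdsWithin_of_eventually_nhds
          (Filter.Tendsto.eventually_const_le ht (tendsto_id))
      have h2 : ∀ᶠ s in nhdsWithin (0:ℝ) (Iio 0), s < 0 :=
        eventually_mem_nhdsWithin
      have h3 : ∀ᶠ s in nhdsWithin (0:ℝ) (Iio 0), K * |s| ^ (κ * δ) < ε :=
        hten.eventually_lt_const hε
      filter_upwards [h1, h2, h3] with s hs1 hs2 hs3 using ⟨hs1, hs2, hs3⟩
    refine ⟨(fun s => φ s t x) '' {s : ℝ | t ≤ s ∧ s < 0 ∧ K * |s| ^ (κ * δ) < ε},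
      mem_map.mpr (mem_of_superset hS (subset_preimage_image _ _)), ?_⟩
    rintro _ ⟨a, ⟨ha1, ha2, ha3⟩, rfl⟩ _ ⟨b, ⟨hb1, hb2, hb3⟩, rfl⟩
    rcases le_total a b with hab | hab
    · rw [dist_comm, dist_eq_norm]
      exact lt_of_le_of_lt (hincr a b ha1 hab hb2) ha3
    · rw [dist_eq_norm]
      exact lt_of_le_of_lt (hincr b a hb1 hab ha2) hb3
  obtain ⟨L, hL⟩ := CompleteSpace.complete hcauchy
  exact ⟨L, hL⟩
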